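/- (Cigler's q-Fibonacci formula) Define F_n(x,s,q) by F_0 = 0, F_1 = 1, and F_n = x F_{n-1} + s q^{n-3} F_{n-2} for n ≥ 2. Then for all n ≥ 1, F_n(x,s,q) = ∑_{k=0}^{n-1} q^{k(k-1)} s^k x^{n-2k-1} C(n-k-1, k)_q. -/

import Mathlib

open Finset

/-- q-Pochhammer symbol (a;q)_n. -/
noncomputable def qPoch {K : Type*} [Field K] (q a : K) (n : ℕ) : K :=
  ∏ j ∈ Finset.range n, (1 - a * q ^ j)

/-- Gaussian (q-)binomial coefficient. -/
noncomputable def qbinom {K : Type*} [Field K] (q : K) (n k : ℕ) : K :=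
  if k ≤ n then qPoch q q n / (qPoch q q k * qPoch q q (n - k)) else 0

variable {K : Type*} [Field K] (q : K)

lemma qPoch_succ (n : ℕ) : qPoch q q (n+1) = qPoch q q n * (1 - q^(n+1)) := by
  simp [qPoch, Finset.prod_range_succ, pow_succ, mul_comm]

lemma qPoch_ne (hne : ∀ j : ℕ, (1:K) - q^(j+1) ≠ 0) (n : ℕ) : qPoch q q n ≠ 0 := by
  induction n with
  | zero => simp [qPoch]
  | succ n ih => rw [qPoch_succ]; exact mul_ne_zero ih (hne n)

lemma qPascal (hne : ∀ j : ℕ, (1:K) - q^(j+1) ≠ 0) (M K' : ℕ) :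
    qbinom q (M+1) (K'+1) = qbinom q M (K'+1) + q^(M-K') * qbinom q M K' := by
  rcases lt_trichotomy K' M with h | rfl | h
  · obtain ⟨d, rfl⟩ : ∃ d, M = K' + 1 + d := ⟨M - (K'+1), by omega⟩
    have h1 : K' + 1 + d + 1 - (K' + 1) = d + 1 := by omega
    have h2 : K' + 1 + d - (K' + 1) = d := by omega
    have h3 : K' + 1 + d - K' = d + 1 := by omega
    rw [qbinom, qbinom, qbinom, if_pos (by omega), if_pos (by omega), if_pos (by omega),
      h1, h2, h3]
    rw [show K' + 1 + d + 1 = (K' + 1 + d) + 1 from rfl, qPoch_succ,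
      show K' + 1 + d = (K' + d) + 1 by ring, qPoch_succ q (K'+d), qPoch_succ q K',
      qPoch_succ q d]
    have P1 := qPoch_ne q hne (K' + d)
    have P2 := qPoch_ne q hne K'
    have P3 := qPoch_ne q hne d
    have n1 := hne (K' + d + 1)
    have n2 := hne K'
    have n3 := hne d
    field_simp
    rw [show K' + d + 1 + 1 = (d + 1) + (K' + 1) by ring, pow_add]
    ring
  · have h1 : K' + 1 - (K' + 1) = 0 := by omega
    rw [qbinom, qbinom, qbinom, if_pos le_rfl, if_neg (by omega), if_pos le_rfl, h1, Nat.sub_self]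
    have P1 := qPoch_ne q hne (K' + 1)
    have P2 := qPoch_ne q hne K'
    have h0 : qPoch q q 0 = 1 := by simp [qPoch]
    field_simp [h0]
    simp
  · rw [qbinom, qbinom, qbinom, if_neg (by omega), if_neg (by omega), if_neg (by omega)]
    ring

lemma qbinom_zero (hne : ∀ j : ℕ, (1:K) - q^(j+1) ≠ 0) (n : ℕ) : qbinom q n 0 = 1 := by
  rw [qbinom, if_pos (Nat.zero_le _), Nat.sub_zero,
    show qPoch q q 0 = 1 by simp [qPoch], one_mul, div_self (qPoch_ne q hne n)]

lemma term_id (hne : ∀ j : ℕ, (1:K) - q^(j+1) ≠ 0) (m j : ℕ) :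
    q ^ ((j+1) * j) * qbinom q (m+1-j) (j+1)
      = q ^ ((j+1) * j) * qbinom q (m-j) (j+1) + q ^ (m + j * (j-1)) * qbinom q (m-j) j := by
  rcases le_or_gt (2*j) m with h | h
  · obtain ⟨d, rfl⟩ : ∃ d, m = 2*j + d := ⟨m - 2*j, by omega⟩
    have e1 : 2*j + d + 1 - j = (j+d) + 1 := by omega
    have e2 : 2*j + d - j = j + d := by omega
    rw [e1, e2, qPascal q hne (j+d) j, show j + d - j = d by omega]
    have key : (j+1) * j + d = 2*j + d + j * (j-1) := by
      cases j with
      | zero => simp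
      | succ i => simp only [Nat.succ_sub_one]; ring
    rw [mul_add, ← mul_assoc, ← pow_add, key]
  · have e1 : qbinom q (m+1-j) (j+1) = 0 := by rw [qbinom, if_neg (by omega)]
    have e2 : qbinom q (m-j) (j+1) = 0 := by rw [qbinom, if_neg (by omega)]
    have e3 : qbinom q (m-j) j = 0 := by rw [qbinom, if_neg (by omega)]
    rw [e1, e2, e3]; ring

lemma sum_step (hne : ∀ j : ℕ, (1:K) - q^(j+1) ≠ 0) (x s : K) (hx : x ≠ 0) (m : ℕ) :
    ∑ k ∈ Finset.range (m+3),
        q ^ (k * (k - 1)) * s ^ k * x ^ ((m:ℤ) + 3 - 2 * k - 1) * qbinom q (m+3-k-1) k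
      = x * ∑ k ∈ Finset.range (m+2),
          q ^ (k * (k - 1)) * s ^ k * x ^ ((m:ℤ) + 2 - 2 * k - 1) * qbinom q (m+2-k-1) k
      + s * q ^ m * ∑ k ∈ Finset.range (m+1),
          q ^ (k * (k - 1)) * s ^ k * x ^ ((m:ℤ) + 1 - 2 * k - 1) * qbinom q (m+1-k-1) k := by
  rw [Finset.sum_range_succ' _ (m+2), Finset.sum_range_succ _ (m+1),
    Finset.mul_sum, Finset.mul_sum, Finset.sum_range_succ' _ (m+1)]
  have hT2 : q ^ ((m+1+1) * (m+1+1-1)) * s ^ (m+1+1) * x ^ ((m:ℤ) + 3 - 2 * ((m:ℕ)+1+1 : ℕ) - 1) *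
      qbinom q (m+3-(m+1+1)-1) (m+1+1) = 0 := by
    rw [show qbinom q (m+3-(m+1+1)-1) (m+1+1) = 0 by rw [qbinom, if_neg (by omega)]]
    ring
  have hT0 : q ^ (0 * (0-1)) * s ^ 0 * x ^ ((m:ℤ) + 3 - 2 * ((0:ℕ) : ℤ) - 1) *
      qbinom q (m+3-0-1) 0
      = x * (q ^ (0 * (0-1)) * s ^ 0 * x ^ ((m:ℤ) + 2 - 2 * ((0:ℕ) : ℤ) - 1) *
        qbinom q (m+2-0-1) 0) := by
    rw [qbinom_zero q hne, qbinom_zero q hne]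
    rw [show (m:ℤ) + 3 - 2 * ((0:ℕ) : ℤ) - 1 = ((m:ℤ) + 2 - 2 * ((0:ℕ) : ℤ) - 1) + 1 by push_cast; ring,
      zpow_add_one₀ hx]
    ring
  rw [hT2, hT0]
  have hsum : ∀ j ∈ Finset.range (m+1),
      q ^ ((j+1) * (j+1-1)) * s ^ (j+1) * x ^ ((m:ℤ) + 3 - 2 * ((j+1 : ℕ) : ℤ) - 1) *
        qbinom q (m+3-(j+1)-1) (j+1)
      = x * (q ^ ((j+1) * (j+1-1)) * s ^ (j+1) * x ^ ((m:ℤ) + 2 - 2 * ((j+1 : ℕ) : ℤ) - 1) *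
          qbinom q (m+2-(j+1)-1) (j+1))
        + s * q ^ m * (q ^ (j * (j-1)) * s ^ j * x ^ ((m:ℤ) + 1 - 2 * (j : ℤ) - 1) *
          qbinom q (m+1-j-1) j) := by
    intro j hj
    have e1 : m+3-(j+1)-1 = m+1-j := by omega
    have e2 : m+2-(j+1)-1 = m-j := by omega
    have e3 : m+1-j-1 = m-j := by omega
    have e4 : j+1-1 = j := by omega
    rw [e1, e2, e3, e4]
    rw [show (m:ℤ) + 3 - 2 * ((j+1 : ℕ) : ℤ) - 1 = (m:ℤ) - 2 * j by push_cast; ring,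
      show (m:ℤ) + 2 - 2 * ((j+1 : ℕ) : ℤ) - 1 = ((m:ℤ) - 2 * j) - 1 by push_cast; ring,
      show (m:ℤ) + 1 - 2 * (j : ℤ) - 1 = (m:ℤ) - 2 * j by push_cast; ring,
      zpow_sub_one₀ hx]
    have := term_id q hne m j
    field_simp
    linear_combination s^(j+1) * this
  rw [Finset.sum_congr rfl hsum, Finset.sum_add_distrib]
  ring

/-- Cigler's q-Fibonacci formula, with x = X 0, s = X 1, q = X 2 indeterminates. -/
theorem cigler_q_fibonacci (F : ℕ → FractionRing (MvPolynomial (Fin 3) ℚ))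
    (x s q : FractionRing (MvPolynomial (Fin 3) ℚ))
    (hx : x = algebraMap (MvPolynomial (Fin 3) ℚ) _ (MvPolynomial.X 0))
    (hs : s = algebraMap (MvPolynomial (Fin 3) ℚ) _ (MvPolynomial.X 1))
    (hq : q = algebraMap (MvPolynomial (Fin 3) ℚ) _ (MvPolynomial.X 2))
    (hF0 : F 0 = 0) (hF1 : F 1 = 1)
    (hF : ∀ n : ℕ, 2 ≤ n → F n = x * F (n - 1) + s * q ^ ((n : ℤ) - 3) * F (n - 2)) :
    ∀ n : ℕ, 1 ≤ n →
      F n = ∑ k ∈ Finset.range n,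
        q ^ (k * (k - 1)) * s ^ k * x ^ ((n : ℤ) - 2 * k - 1) * qbinom q (n - k - 1) k := by
  have inj := IsFractionRing.injective (MvPolynomial (Fin 3) ℚ)
      (FractionRing (MvPolynomial (Fin 3) ℚ))
  have hne : ∀ j : ℕ, (1 : FractionRing (MvPolynomial (Fin 3) ℚ)) - q ^ (j+1) ≠ 0 := by
    intro j h
    have h1 : q ^ (j+1) = 1 := by linear_combination -h
    rw [hq, ← map_pow, show (1 : FractionRing (MvPolynomial (Fin 3) ℚ))
      = algebraMap (MvPolynomial (Fin 3) ℚ) _ 1 by simp] at h1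
    have h2 := inj h1
    have h3 := congrArg (MvPolynomial.eval (fun _ => (2:ℚ))) h2
    simp at h3
    have : (2:ℚ) ^ (j+1) ≠ 1 := by
      have : (1:ℚ) < 2 ^ (j+1) := one_lt_pow₀ (by norm_num) (by omega)
      linarith
    exact this h3
  have hx0 : x ≠ 0 := by
    rw [hx]
    intro h
    rw [show (0 : FractionRing (MvPolynomial (Fin 3) ℚ))
      = algebraMap (MvPolynomial (Fin 3) ℚ) _ 0 by simp] at h
    exact MvPolynomial.X_ne_zero 0 (inj h)
  intro n
  induction n using Nat.strong_induction_on with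
  | _ n ih =>
    intro hn
    match n, hn with
    | 1, _ =>
      rw [Finset.sum_range_one, hF1, qbinom_zero q hne]
      norm_num
    | 2, _ =>
      have h2 := hF 2 (by norm_num)
      norm_num [hF0, hF1] at h2
      rw [h2, Finset.sum_range_succ, Finset.sum_range_one, qbinom_zero q hne,
        show qbinom q (2-1-1) 1 = 0 by rw [qbinom, if_neg (by omega)]]
      norm_num
    | (m+3), _ =>
      have hrec := hF (m+3) (by omega)
      rw [show m+3-1 = m+2 by omega, show m+3-2 = m+1 by omega,
        show ((m+3 : ℕ) : ℤ) - 3 = ((m : ℕ) : ℤ) by push_cast; ring,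
        zpow_natCast] at hrec
      rw [hrec, ih (m+2) (by omega) (by omega), ih (m+1) (by omega) (by omega)]
      have step := sum_step q hne x s hx0 m
      rw [show ((m+2 : ℕ) : ℤ) = (m : ℤ) + 2 by push_cast; ring,
        show ((m+1 : ℕ) : ℤ) = (m : ℤ) + 1 by push_cast; ring,
        show ((m+3 : ℕ) : ℤ) = (m : ℤ) + 3 by push_cast; ring]
      exact step.symm
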